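/- For the Dobrushin-type bound: for any c ∈ [0,1] and any Markov kernel (column-stochastic matrix) T from finite set X to finite set Y, I_{f_c}(T∘P, T∘Q) ≤ ϑ_c(T)·I_{f_c}(P,Q) for all probability mass functions P, Q on X, where ϑ_c(T) := (1/min(c,c̄))·max_{x,x'∈X} I_{f_c}(T(x), T(x')) for c ∈ (0,1), and I_{f_c}(P,Q) = (1/2)(d_TV(cP, c̄Q) − |2c−1|). -/

import Mathlib

open Finset

/-- The `c`-primitive `f`-divergence between two probability mass functions on a finite set,
expressed via total variation: `I_{f_c}(P,Q) = (1/2)(d_TV(cP, (1-c)Q) - |2c-1|)`. -/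
noncomputable def Ifc {Z : Type*} [Fintype Z] (c : ℝ) (P Q : Z → ℝ) : ℝ :=
  (1 / 2) * ((∑ z, |c * P z - (1 - c) * Q z|) - |2 * c - 1|)

/-- The generalized Dobrushin coefficient of a Markov kernel `T : X ⇝ Y`. -/
noncomputable def genDobrushin {X Y : Type*} [Fintype X] [Fintype Y] [Nonempty X]
    (c : ℝ) (T : X → Y → ℝ) : ℝ :=
  (1 / min c (1 - c)) *
    (Finset.univ.sup' Finset.univ_nonempty (fun p : X × X => Ifc c (T p.1) (T p.2)))

private lemma abs_eq_two_max_sub (a : ℝ) : |a| = 2 * max a 0 - a := by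
  rcases le_total a 0 with h | h
  · rw [abs_of_nonpos h, max_eq_right h]; ring
  · rw [abs_of_nonneg h, max_eq_left h]; ring

private lemma sum_abs_key {Z : Type*} [Fintype Z] (f : Z → ℝ) :
    (1 / 2) * ((∑ z, |f z|) - |∑ z, f z|)
      = (∑ z, max (f z) 0) - max (∑ z, f z) 0 := by
  simp_rw [abs_eq_two_max_sub]
  rw [Finset.sum_sub_distrib, ← Finset.mul_sum]
  ring

private lemma sum_cond {Z : Type*} [Fintype Z] (c : ℝ) {P Q : Z → ℝ}
    (hP : ∑ z, P z = 1) (hQ : ∑ z, Q z = 1) :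
    ∑ z, (c * P z - (1 - c) * Q z) = 2 * c - 1 := by
  rw [Finset.sum_sub_distrib, ← Finset.mul_sum, ← Finset.mul_sum, hP, hQ]; ring

private lemma ifc_eq_aux {Z : Type*} [Fintype Z] {c : ℝ} {P Q : Z → ℝ}
    (h : ∑ z, (c * P z - (1 - c) * Q z) = 2 * c - 1) :
    Ifc c P Q = (∑ z, max (c * P z - (1 - c) * Q z) 0) - max (2 * c - 1) 0 := by
  have key := sum_abs_key (fun z => c * P z - (1 - c) * Q z)
  rw [h] at key
  unfold Ifc
  exact key

private lemma max_sum_le {Z : Type*} [Fintype Z] (f : Z → ℝ) :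
    max (∑ z, f z) 0 ≤ ∑ z, max (f z) 0 := by
  apply max_le
  · exact Finset.sum_le_sum (fun z _ => le_max_left _ _)
  · exact Finset.sum_nonneg (fun z _ => le_max_right _ _)

private lemma ifc_nonneg {Z : Type*} [Fintype Z] {c : ℝ} {P Q : Z → ℝ}
    (hP : ∑ z, P z = 1) (hQ : ∑ z, Q z = 1) : 0 ≤ Ifc c P Q := by
  rw [ifc_eq_aux (sum_cond c hP hQ)]
  have h := max_sum_le (fun z => c * P z - (1 - c) * Q z)
  rw [sum_cond c hP hQ] at h
  linarith

theorem sdpi_c_primitive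
    {X Y : Type*} [Fintype X] [Fintype Y] [Nonempty X]
    (T : X → Y → ℝ) (hT0 : ∀ x y, 0 ≤ T x y) (hT1 : ∀ x, ∑ y, T x y = 1)
    (c : ℝ) (hc0 : 0 < c) (hc1 : c < 1)
    (P Q : X → ℝ) (hP0 : ∀ x, 0 ≤ P x) (hQ0 : ∀ x, 0 ≤ Q x)
    (hP1 : ∑ x, P x = 1) (hQ1 : ∑ x, Q x = 1) :
    Ifc c (fun y => ∑ x, T x y * P x) (fun y => ∑ x, T x y * Q x)
      ≤ genDobrushin c T * Ifc c P Q := by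
  classical
  set A : X → ℝ := fun x => c * P x - (1 - c) * Q x with hA
  set Bf : Y → ℝ := fun y => c * (∑ x, T x y * P x) - (1 - c) * (∑ x, T x y * Q x) with hBf
  have hBsum : ∀ y, Bf y = ∑ x, T x y * A x := by
    intro y
    simp only [hBf, hA, Finset.mul_sum]
    rw [← Finset.sum_sub_distrib]
    exact Finset.sum_congr rfl (fun x _ => by ring)
  set S : Finset Y := Finset.univ.filter (fun y => 0 < Bf y) with hS
  set g : X → ℝ := fun x => ∑ y ∈ S, T x y with hg
  -- the positive part of the pushforward
  have htS : (∑ y, max (Bf y) 0) = ∑ y ∈ S, Bf y := by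
    rw [hS, Finset.sum_filter]
    apply Finset.sum_congr rfl
    intro y _
    rcases lt_or_ge 0 (Bf y) with h | h
    · rw [if_pos h, max_eq_left h.le]
    · rw [if_neg (not_lt.2 h), max_eq_right h]
  have htg : (∑ y ∈ S, Bf y) = ∑ x, A x * g x := by
    calc (∑ y ∈ S, Bf y) = ∑ y ∈ S, ∑ x, T x y * A x :=
          Finset.sum_congr rfl (fun y _ => hBsum y)
      _ = ∑ x, ∑ y ∈ S, T x y * A x := Finset.sum_comm
      _ = ∑ x, A x * g x := by
          apply Finset.sum_congr rfl
          intro x _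
          rw [hg, ← Finset.sum_mul, mul_comm]
  have hg0 : ∀ x, 0 ≤ g x := fun x => Finset.sum_nonneg (fun y _ => hT0 x y)
  have hg1 : ∀ x, g x ≤ 1 := by
    intro x
    rw [← hT1 x, hg]
    exact Finset.sum_le_sum_of_subset_of_nonneg (Finset.filter_subset _ _)
      (fun y _ _ => hT0 x y)
  have hXne : (Finset.univ : Finset X).Nonempty := Finset.univ_nonempty
  set a := Finset.univ.sup' hXne g with ha
  set b := Finset.univ.inf' hXne g with hb
  have ha1 : a ≤ 1 := Finset.sup'_le _ _ (fun x _ => hg1 x)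
  have hb0 : 0 ≤ b := Finset.le_inf' _ _ (fun x _ => hg0 x)
  obtain ⟨x₀, -, hx₀⟩ := Finset.exists_mem_eq_sup' hXne g
  obtain ⟨x₁, -, hx₁⟩ := Finset.exists_mem_eq_inf' hXne g
  have hba : b ≤ a :=
    le_trans (Finset.inf'_le g (Finset.mem_univ x₀)) (Finset.le_sup' g (Finset.mem_univ x₀))
  set sp := ∑ x, max (A x) 0 with hsp
  set sm := ∑ x, max (-A x) 0 with hsm
  have hmax_sub : ∀ t : ℝ, max t 0 - max (-t) 0 = t := by
    intro t; rcases le_total t 0 with h | h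
    · rw [max_eq_right h, max_eq_left (by linarith)]; ring
    · rw [max_eq_left h, max_eq_right (by linarith)]; ring
  have hsd : sp - sm = 2 * c - 1 := by
    rw [hsp, hsm, ← Finset.sum_sub_distrib]
    simp_rw [hmax_sub]
    simp only [hA]
    exact sum_cond c hP1 hQ1
  have hsp0 : 0 ≤ sp := Finset.sum_nonneg (fun x _ => le_max_right _ _)
  have hsm0 : 0 ≤ sm := Finset.sum_nonneg (fun x _ => le_max_right _ _)
  have hsp_le : sp ≤ c := by
    have h1 : ∀ x, max (A x) 0 ≤ c * P x := by
      intro x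
      apply max_le
      · simp only [hA]; nlinarith [hQ0 x, hc1]
      · exact mul_nonneg hc0.le (hP0 x)
    calc sp ≤ ∑ x, c * P x := Finset.sum_le_sum (fun x _ => h1 x)
      _ = c := by rw [← Finset.mul_sum, hP1, mul_one]
  have hsm_le : sm ≤ 1 - c := by
    have h1 : ∀ x, max (-A x) 0 ≤ (1 - c) * Q x := by
      intro x
      apply max_le
      · simp only [hA]; nlinarith [hP0 x, hc0]
      · exact mul_nonneg (by linarith) (hQ0 x)
    calc sm ≤ ∑ x, (1 - c) * Q x := Finset.sum_le_sum (fun x _ => h1 x)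
      _ = 1 - c := by rw [← Finset.mul_sum, hQ1, mul_one]
  -- bound the transported mass by extreme values of g
  have htb : (∑ x, A x * g x) ≤ a * sp - b * sm := by
    have h1 : ∀ x, A x * g x ≤ a * max (A x) 0 - b * max (-A x) 0 := by
      intro x
      have hga := Finset.le_sup' g (Finset.mem_univ x)
      have hgb := Finset.inf'_le g (Finset.mem_univ x)
      rcases le_total (A x) 0 with h | h
      · rw [max_eq_right h, max_eq_left (by linarith)]
        nlinarith [mul_le_mul_of_nonpos_left hgb h]
      · rw [max_eq_left h, max_eq_right (by linarith)]
        nlinarith [mul_le_mul_of_nonneg_left hga h]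
    calc (∑ x, A x * g x) ≤ ∑ x, (a * max (A x) 0 - b * max (-A x) 0) :=
          Finset.sum_le_sum (fun x _ => h1 x)
      _ = a * sp - b * sm := by
          rw [Finset.sum_sub_distrib, ← Finset.mul_sum, ← Finset.mul_sum, hsp, hsm]
  -- the pairwise constraint
  have hrow : ∀ x x' : X, Ifc c (T x) (T x')
      = (∑ y, max (c * T x y - (1 - c) * T x' y) 0) - max (2 * c - 1) 0 :=
    fun x x' => ifc_eq_aux (sum_cond c (hT1 x) (hT1 x'))
  rw [genDobrushin]
  set K := Finset.univ.sup' Finset.univ_nonempty (fun p : X × X => Ifc c (T p.1) (T p.2))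
    with hK
  have hK0 : 0 ≤ K :=
    le_trans (ifc_nonneg (hT1 x₀) (hT1 x₀))
      (Finset.le_sup' (fun p : X × X => Ifc c (T p.1) (T p.2)) (Finset.mem_univ (x₀, x₀)))
  have hpair : c * a - (1 - c) * b ≤ K + max (2 * c - 1) 0 := by
    have h1 : c * a - (1 - c) * b = ∑ y ∈ S, (c * T x₀ y - (1 - c) * T x₁ y) := by
      rw [ha, hb, hx₀, hx₁]; simp only [hg]
      rw [Finset.sum_sub_distrib, ← Finset.mul_sum, ← Finset.mul_sum]
    have h2 : (∑ y ∈ S, (c * T x₀ y - (1 - c) * T x₁ y))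
        ≤ ∑ y ∈ S, max (c * T x₀ y - (1 - c) * T x₁ y) 0 :=
      Finset.sum_le_sum (fun y _ => le_max_left _ _)
    have h3 : (∑ y ∈ S, max (c * T x₀ y - (1 - c) * T x₁ y) 0)
        ≤ ∑ y, max (c * T x₀ y - (1 - c) * T x₁ y) 0 := by
      rw [hS]
      exact Finset.sum_le_sum_of_subset_of_nonneg (Finset.filter_subset _ _)
        (fun y _ _ => le_max_right _ _)
    have h4 : Ifc c (T x₀) (T x₁) ≤ K :=
      Finset.le_sup' (fun p : X × X => Ifc c (T p.1) (T p.2)) (Finset.mem_univ (x₀, x₁))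
    have h5 := hrow x₀ x₁
    linarith
  -- rewrite both divergences
  have hIfcPQ : Ifc c P Q = sp - max (2 * c - 1) 0 := by
    rw [ifc_eq_aux (sum_cond c hP1 hQ1)]
  have hsumB : (∑ y, Bf y) = 2 * c - 1 := by
    calc (∑ y, Bf y) = ∑ y, ∑ x, T x y * A x := Finset.sum_congr rfl (fun y _ => hBsum y)
      _ = ∑ x, ∑ y, T x y * A x := Finset.sum_comm
      _ = ∑ x, A x := Finset.sum_congr rfl (fun x _ => by rw [← Finset.sum_mul, hT1 x, one_mul])
      _ = 2 * c - 1 := by simp only [hA]; exact sum_cond c hP1 hQ1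
  have hIfcT : Ifc c (fun y => ∑ x, T x y * P x) (fun y => ∑ x, T x y * Q x)
      = (∑ y, max (Bf y) 0) - max (2 * c - 1) 0 := by
    have hcond : ∑ y, (c * (∑ x, T x y * P x) - (1 - c) * (∑ x, T x y * Q x)) = 2 * c - 1 := by
      simp only [hBf] at hsumB
      exact hsumB
    rw [ifc_eq_aux hcond]
  rw [hIfcT, hIfcPQ]
  have hd : 0 < min c (1 - c) := lt_min hc0 (by linarith)
  have htfinal : (∑ y, max (Bf y) 0) ≤ a * sp - b * sm := by
    rw [htS, htg]; exact htb
  have h6 : 1 / min c (1 - c) * K * (sp - max (2 * c - 1) 0)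
      = K * (sp - max (2 * c - 1) 0) / min c (1 - c) := by
    field_simp
  rw [h6, le_div_iff₀ hd]
  clear_value A Bf S g a b sp sm K
  clear hrow htS htg hIfcT hIfcPQ hsumB h6 hBsum hx₀ hx₁ hg0 hg1 hmax_sub htb hA hBf hS hg ha hb hsp hsm hK
  clear hT0 hT1 hP0 hQ0 hP1 hQ1 T P Q A S g
  rcases le_total c (1 / 2) with hc | hc
  · have hM : max (2 * c - 1) 0 = 0 := max_eq_right (by linarith)
    have hmin : min c (1 - c) = c := min_eq_left (by linarith)
    rw [hM] at hpair ⊢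
    rw [hmin]
    have hsm_eq : sm = sp - (2 * c - 1) := by linarith
    have H1 : c * (∑ y, max (Bf y) 0) ≤ c * (a * sp - b * sm) :=
      mul_le_mul_of_nonneg_left htfinal hc0.le
    have H2 : 0 ≤ sp * (K + (1 - c) * b - c * a) := mul_nonneg hsp0 (by linarith)
    have H3 : 0 ≤ (c - sp) * ((1 - 2 * c) * b) :=
      mul_nonneg (by linarith) (mul_nonneg (by linarith) hb0)
    have H4 : c * (a * sp - b * sm) = c * a * sp - c * b * sp + c * b * (2 * c - 1) := by
      rw [hsm_eq]; ring
    linarith [H1, H2, H3, H4]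
  · have hM : max (2 * c - 1) 0 = 2 * c - 1 := max_eq_left (by linarith)
    have hmin : min c (1 - c) = 1 - c := min_eq_right (by linarith)
    rw [hM] at hpair ⊢
    rw [hmin]
    have hsp_eq : sp = sm + (2 * c - 1) := by linarith
    have H1 : (1 - c) * (∑ y, max (Bf y) 0) ≤ (1 - c) * (a * sp - b * sm) :=
      mul_le_mul_of_nonneg_left htfinal (by linarith)
    have H2 : 0 ≤ sm * (K + (2 * c - 1) + (1 - c) * b - c * a) := mul_nonneg hsm0 (by linarith)
    have H3 : 0 ≤ ((1 - c) - sm) * ((2 * c - 1) * (1 - a)) :=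
      mul_nonneg (by linarith) (mul_nonneg (by linarith) (by linarith))
    have H4 : (1 - c) * (a * sp - b * sm)
        = (1 - c) * a * sm + (1 - c) * a * (2 * c - 1) - (1 - c) * b * sm := by
      rw [hsp_eq]; ring
    have H5 : K * (sp - (2 * c - 1)) = K * sm := by rw [hsp_eq]; ring
    linarith [H1, H2, H3, H4, H5]
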